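/- Suppose if λ_+ = λ_- = λ with |λ| = ρ ≤ 1 and λ real, then for k ≥ 2 the matrix M^k (with M = [[0,1],[-λ², 2λ]]) satisfies ‖M^k‖₂ ≥ 2·ρ^{k+1}·(k-1). -/

import Mathlib

noncomputable def l2normR (A : Matrix (Fin 2) (Fin 2) ℝ) : ℝ :=
  ‖Matrix.toEuclideanCLM (𝕜 := ℝ) (n := Fin 2) A‖

lemma l2normR_lb (A : Matrix (Fin 2) (Fin 2) ℝ) (x : Fin 2 → ℝ) :
    Real.sqrt ((A.mulVec x 0)^2 + (A.mulVec x 1)^2) ≤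
      l2normR A * Real.sqrt ((x 0)^2 + (x 1)^2) := by
  have h := (Matrix.toEuclideanCLM (𝕜 := ℝ) (n := Fin 2) A).le_opNorm
    ((WithLp.equiv 2 _).symm x)
  change ‖Matrix.toEuclideanCLM (𝕜 := ℝ) (n := Fin 2) A (WithLp.toLp 2 x)‖ ≤ _ * ‖WithLp.toLp 2 x‖ at h
  rw [Matrix.toEuclideanCLM_toLp] at h
  simpa [EuclideanSpace.norm_eq, Fin.sum_univ_two, Real.norm_eq_abs, sq_abs,
    Matrix.toLin'_apply, l2normR] using h

lemma powf (lam : ℝ) : ∀ k : ℕ,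
    (!![0, 1; -lam ^ 2, 2 * lam] : Matrix (Fin 2) (Fin 2) ℝ) ^ (k + 1) =
      !![-(k : ℝ) * lam ^ (k + 1), ((k : ℝ) + 1) * lam ^ k;
         -((k : ℝ) + 1) * lam ^ (k + 2), ((k : ℝ) + 2) * lam ^ (k + 1)] := by
  intro k
  induction k with
  | zero => norm_num
  | succ n ih =>
    rw [pow_succ, ih, Matrix.mul_fin_two]
    push_cast
    congr 1 <;> ring

lemma keyineq (ρ : ℝ) (hρ0 : 0 ≤ ρ) (hρ : ρ ≤ 1) (n : ℕ) :
    8 * (n : ℝ)^2 * (ρ^(n+2))^2 ≤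
      ((n : ℝ) * ρ^(n+1) + ((n : ℝ)+1) * ρ^n)^2 +
      (((n : ℝ)+1) * ρ^(n+2) + ((n : ℝ)+2) * ρ^(n+1))^2 := by
  have h1 : ρ^(n+1) ≤ ρ^n := pow_le_pow_of_le_one hρ0 hρ (Nat.le_succ n)
  have h2 : ρ^(n+2) ≤ ρ^(n+1) := pow_le_pow_of_le_one hρ0 hρ (Nat.le_succ _)
  have h3 : (0:ℝ) ≤ ρ^(n+2) := pow_nonneg hρ0 _
  have h4 : (0:ℝ) ≤ ρ^(n+1) := pow_nonneg hρ0 _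
  have h5 : (0:ℝ) ≤ ρ^n := pow_nonneg hρ0 _
  have hn : (0:ℝ) ≤ (n:ℝ) := Nat.cast_nonneg n
  nlinarith [mul_le_mul_of_nonneg_left h1 hn, mul_le_mul_of_nonneg_left h2 hn,
    mul_nonneg hn h3, mul_nonneg hn h4, mul_nonneg hn h5, sq_nonneg ((n:ℝ)*ρ^(n+1)),
    mul_nonneg (mul_nonneg hn hn) (mul_nonneg h3 (sub_nonneg.2 h2)),
    mul_nonneg (mul_nonneg hn hn) (mul_nonneg h4 (sub_nonneg.2 h1)),
    mul_nonneg (mul_nonneg hn hn) (mul_nonneg h3 (sub_nonneg.2 h1))]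

lemma hsqpos (ρ : ℝ) (n : ℕ) :
    ((!![-(n : ℝ) * ρ ^ (n + 1), ((n : ℝ) + 1) * ρ ^ n;
       -((n : ℝ) + 1) * ρ ^ (n + 2), ((n : ℝ) + 2) * ρ ^ (n + 1)]).mulVec ![1,-1] 0)^2
    + ((!![-(n : ℝ) * ρ ^ (n + 1), ((n : ℝ) + 1) * ρ ^ n;
       -((n : ℝ) + 1) * ρ ^ (n + 2), ((n : ℝ) + 2) * ρ ^ (n + 1)]).mulVec ![1,-1] 1)^2 =
      ((n : ℝ) * ρ^(n+1) + ((n : ℝ)+1) * ρ^n)^2 +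
      (((n : ℝ)+1) * ρ^(n+2) + ((n : ℝ)+2) * ρ^(n+1))^2 := by
  simp [Matrix.mulVec, dotProduct, Fin.sum_univ_two]
  ring

lemma hsqneg (ρ : ℝ) (n : ℕ) :
    ((!![-(n : ℝ) * (-ρ) ^ (n + 1), ((n : ℝ) + 1) * (-ρ) ^ n;
       -((n : ℝ) + 1) * (-ρ) ^ (n + 2), ((n : ℝ) + 2) * (-ρ) ^ (n + 1)]).mulVec ![1,1] 0)^2
    + ((!![-(n : ℝ) * (-ρ) ^ (n + 1), ((n : ℝ) + 1) * (-ρ) ^ n;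
       -((n : ℝ) + 1) * (-ρ) ^ (n + 2), ((n : ℝ) + 2) * (-ρ) ^ (n + 1)]).mulVec ![1,1] 1)^2 =
      ((n : ℝ) * ρ^(n+1) + ((n : ℝ)+1) * ρ^n)^2 +
      (((n : ℝ)+1) * ρ^(n+2) + ((n : ℝ)+2) * ρ^(n+1))^2 := by
  simp [Matrix.mulVec, dotProduct, Fin.sum_univ_two]
  rcases Nat.even_or_odd n with h | h <;>
    rw [show n + 2 = n + 1 + 1 from rfl] <;>
    rw [h.neg_pow, (h.add_one).neg_pow, (h.add_one.add_one).neg_pow] <;> ring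

lemma mainlem (ρ : ℝ) (hρ0 : 0 ≤ ρ) (hρ : ρ ≤ 1) (n : ℕ)
    (A : Matrix (Fin 2) (Fin 2) ℝ)
    (hsq : (A.mulVec x 0)^2 + (A.mulVec x 1)^2 =
      ((n : ℝ) * ρ^(n+1) + ((n : ℝ)+1) * ρ^n)^2 +
      (((n : ℝ)+1) * ρ^(n+2) + ((n : ℝ)+2) * ρ^(n+1))^2)
    (hxnorm : Real.sqrt ((x 0)^2 + (x 1)^2) = Real.sqrt 2) :
    2 * ρ ^ (n + 2) * (n : ℝ) ≤ l2normR A := by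
  have hlb := l2normR_lb A x
  rw [hsq, hxnorm] at hlb
  have hs2 : (0:ℝ) < Real.sqrt 2 := by positivity
  have hstep : 2 * ρ ^ (n + 2) * (n : ℝ) * Real.sqrt 2 ≤
      Real.sqrt (((n : ℝ) * ρ^(n+1) + ((n : ℝ)+1) * ρ^n)^2 +
        (((n : ℝ)+1) * ρ^(n+2) + ((n : ℝ)+2) * ρ^(n+1))^2) := by
    rw [Real.le_sqrt (by positivity) (by positivity)]
    rw [mul_pow, Real.sq_sqrt (by norm_num : (0:ℝ) ≤ 2)]
    have hk := keyineq ρ hρ0 hρ n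
    nlinarith [hk]
  exact le_of_mul_le_mul_right (hstep.trans hlb) hs2

theorem stmt15 (lam ρ : ℝ) (hlam : |lam| = ρ) (hρ : ρ ≤ 1)
    (M : Matrix (Fin 2) (Fin 2) ℝ) (hM : M = !![0, 1; -lam ^ 2, 2 * lam]) :
    ∀ k : ℕ, 2 ≤ k → 2 * ρ ^ (k + 1) * ((k : ℝ) - 1) ≤ l2normR (M ^ k) := by
  intro k hk
  obtain ⟨n, rfl⟩ : ∃ n, k = n + 1 := ⟨k - 1, (Nat.succ_pred_eq_of_pos (by omega)).symm⟩
  have hρ0 : 0 ≤ ρ := hlam ▸ abs_nonneg lam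
  subst hM
  rw [powf lam n]
  have hcast : ((n + 1 : ℕ) : ℝ) - 1 = (n : ℝ) := by push_cast; ring
  rw [hcast, show n + 1 + 1 = n + 2 from rfl]
  rcases le_or_gt 0 lam with hl | hl
  · have hle : lam = ρ := by rw [← hlam, abs_of_nonneg hl]
    subst hle
    exact mainlem _ hρ0 hρ n _ (hsqpos _ n) (by norm_num)
  · have hle : lam = -ρ := by rw [← hlam, abs_of_neg hl]; ring
    subst hle
    exact mainlem ρ hρ0 hρ n _ (hsqneg ρ n) (by norm_num)
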